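/- arXiv:1212.1977 — 2 statements merged into one kernel-verified Lean document; each statement's English description precedes it below -/
import Mathlib

section
/- Let G be a connected graph on n vertices with diameter D ≥ 1, and set s = 1 + Σ_{i=D}^{n−1} (n−i)·⌊i/D⌋. Then for every t ≥ s, the t-fold Cartesian power G^t does not admit a consecutive radio labeling; i.e., rn(G^t) > n^t. -/
/-- The `t`-fold Cartesian product power of a graph `G`. -/
def SimpleGraph.cartPow {V : Type*} (G : SimpleGraph V) (t : ℕ) :
    SimpleGraph (Fin t → V) where
  Adj x y := ∃ a, G.Adj (x a) (y a) ∧ ∀ k, k ≠ a → x k = y k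
  symm := by
    constructor
    rintro x y ⟨a, h, hk⟩
    exact ⟨a, h.symm, fun k hk' => (hk k hk').symm⟩
  loopless := by
    constructor
    rintro x ⟨a, h, -⟩
    exact G.loopless.irrefl _ h


open Finset

section Aux

variable {V : Type*} {G : SimpleGraph V}

lemma cartPow_walk_update {t : ℕ} (a : Fin t) :
    ∀ {p q : V} (w : G.Walk p q) (x : Fin t → V), x a = p →
      ∃ w' : (G.cartPow t).Walk x (Function.update x a q), w'.length = w.length := by
  intro p q w
  induction w with
  | nil =>
    rename_i q'
    intro x hx
    have hv : x = Function.update x a q' := by rw [← hx, Function.update_eq_self]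
    exact ⟨SimpleGraph.Walk.nil.copy rfl hv, by simp⟩
  | @cons p p' q h w ih =>
    intro x hx
    obtain ⟨w', hw'⟩ := ih (Function.update x a p') (Function.update_self a p' x)
    have hadj : (G.cartPow t).Adj x (Function.update x a p') := by
      refine ⟨a, ?_, fun k hk => (Function.update_of_ne hk _ _).symm⟩
      rw [hx, Function.update_self]
      exact h
    refine ⟨SimpleGraph.Walk.cons hadj (w'.copy rfl (by rw [Function.update_idem])), ?_⟩
    simp [hw']

lemma cartPow_dist_le (hG : G.Connected) {t : ℕ} (x y : Fin t → V) :
    (G.cartPow t).dist x y ≤ ∑ a, G.dist (x a) (y a) := by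
  suffices h : ∀ (s : Finset (Fin t)) (x y : Fin t → V), (∀ a ∉ s, x a = y a) →
      ∃ w : (G.cartPow t).Walk x y, w.length ≤ ∑ a ∈ s, G.dist (x a) (y a) by
    obtain ⟨w, hw⟩ := h Finset.univ x y (by simp)
    exact (SimpleGraph.dist_le w).trans hw
  intro s
  induction s using Finset.induction_on with
  | empty =>
    intro x y hxy
    exact ⟨SimpleGraph.Walk.nil.copy rfl (funext fun a => hxy a (by simp)), by simp⟩
  | @insert a s ha ih =>
    intro x y hxy
    obtain ⟨p, hp, hplen⟩ := hG.exists_path_of_dist (x a) (y a)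
    obtain ⟨w1, hw1⟩ := cartPow_walk_update a p x rfl
    obtain ⟨w2, hw2⟩ := ih (Function.update x a (y a)) y (by
      intro b hb
      by_cases hba : b = a
      · rw [hba]; exact Function.update_self a (y a) x
      · rw [Function.update_of_ne hba]
        exact hxy b (by simp [hb, hba]))
    refine ⟨w1.append w2, ?_⟩
    rw [SimpleGraph.Walk.length_append, Finset.sum_insert ha]
    have : ∑ b ∈ s, G.dist (Function.update x a (y a) b) (y b) = ∑ b ∈ s, G.dist (x b) (y b) :=
      Finset.sum_congr rfl fun b hb => by
        rw [Function.update_of_ne (fun h => ha (by rw [h] at hb; exact hb))]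
    omega
open Finset

lemma sum_sum_range_eq (a : ℕ → ℕ) : ∀ N : ℕ,
    ∑ m ∈ range (N + 1), ∑ k ∈ range m, a k = ∑ k ∈ range N, (N - k) * a k := by
  intro N
  induction N with
  | zero => simp
  | succ N ih =>
    rw [Finset.sum_range_succ, ih]
    have h1 : ∑ k ∈ range (N + 1), (N + 1 - k) * a k
        = ∑ k ∈ range (N + 1), ((N - k) * a k + a k) := by
      refine Finset.sum_congr rfl fun k hk => ?_
      have : k ≤ N := by simpa [Nat.lt_succ_iff] using hk
      have : N + 1 - k = (N - k) + 1 := by omega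
      rw [this, add_mul, one_mul]
    rw [h1, Finset.sum_add_distrib, Finset.sum_range_succ (fun k => (N - k) * a k)]
    simp

lemma big_sum_eq (n D : ℕ) (hn : 1 ≤ n) :
    ∑ p : Fin (n + 1) × Fin (n + 1), ((p.2 : ℕ) - p.1 - 1) / D
      = ∑ i ∈ Finset.Icc D (n - 1), (n - i) * (i / D) := by
  rw [Fintype.sum_prod_type]
  rw [Fin.sum_univ_eq_sum_range (fun i => ∑ j : Fin (n+1), ((j : ℕ) - i - 1) / D)]
  have step1 : ∀ i ∈ range (n+1), (∑ j : Fin (n+1), ((j : ℕ) - i - 1) / D)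
      = ∑ j ∈ range (n+1), (j - i - 1) / D := fun i _ =>
    Fin.sum_univ_eq_sum_range (fun j => (j - i - 1) / D) (n+1)
  rw [Finset.sum_congr rfl step1, Finset.sum_comm]
  have step2 : ∀ m ∈ range (n+1), (∑ i ∈ range (n+1), (m - i - 1) / D)
      = ∑ k ∈ range m, k / D := by
    intro m hm
    have hsub : range m ⊆ range (n+1) := Finset.range_subset_range.mpr (by have := mem_range.mp hm; omega)
    rw [← Finset.sum_subset hsub (fun i _ hi => by
      have : m ≤ i := by simpa using hi
      have : m - i - 1 = 0 := by omega
      simp [this])]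
    have : ∀ i ∈ range m, (m - i - 1) / D = (m - 1 - i) / D := fun i _ => by
      congr 1; omega
    rw [Finset.sum_congr rfl this, Finset.sum_range_reflect (fun k => k / D) m]
  rw [Finset.sum_congr rfl step2]
  have : n - 1 + 1 = n := by omega
  rw [show n + 1 = (n - 1 + 1) + 1 by omega, sum_sum_range_eq (fun k => k / D) (n-1+1)]
  rw [this]
  symm
  apply Finset.sum_subset
  · intro k hk
    simp only [Finset.mem_Icc] at hk
    exact mem_range.mpr (by omega)
  · intro k hk hk2
    simp only [Finset.mem_Icc, mem_range, not_and, not_le] at hk hk2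
    have hkD : k < D := by omega
    rw [Nat.div_eq_of_lt hkD, mul_zero]

end Aux

theorem cartPow_no_consecutive_radio_labeling {V : Type*} [Fintype V] {n : ℕ}
    (G : SimpleGraph V) (hG : G.Connected) (hcard : Fintype.card V = n)
    (hD : 1 ≤ G.diam) {t : ℕ}
    (ht : 1 + ∑ i ∈ Finset.Icc G.diam (n - 1), (n - i) * (i / G.diam) ≤ t) :
    ¬∃ f : (Fin t → V) ≃ Fin (n ^ t),
        ∀ u v : Fin t → V, u ≠ v →
          ((t * G.diam : ℕ) : ℤ) + 1 - (G.cartPow t).dist u v ≤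
            |(((f u : ℕ) + 1 : ℕ) : ℤ) - (((f v : ℕ) + 1 : ℕ) : ℤ)| := by
  classical
  rintro ⟨f, hf⟩
  have hD0 : G.diam ≠ 0 := by omega
  have hnetop : G.ediam ≠ ⊤ := SimpleGraph.ediam_ne_top_of_diam_ne_zero hD0
  have hnontriv : Nontrivial V := SimpleGraph.nontrivial_of_diam_ne_zero hD0
  have hn2 : 2 ≤ n := hcard ▸ Fintype.one_lt_card
  -- the diameter is less than n
  have hDn : G.diam < n := by
    obtain ⟨u, v, huv⟩ := SimpleGraph.exists_dist_eq_diam (G := G)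
    obtain ⟨p, hp, hlen⟩ := hG.exists_path_of_dist u v
    have hlt := hp.length_lt
    omega
  -- t is at least 2
  have hsum1 : 1 ≤ ∑ i ∈ Finset.Icc G.diam (n - 1), (n - i) * (i / G.diam) := by
    have hmem : G.diam ∈ Finset.Icc G.diam (n - 1) := Finset.mem_Icc.mpr ⟨le_refl _, by omega⟩
    have h := Finset.single_le_sum (f := fun i => (n - i) * (i / G.diam))
      (fun i _ => Nat.zero_le _) hmem
    have hdd : G.diam / G.diam = 1 := Nat.div_self (by omega)
    simp only [hdd, mul_one] at h
    omega
  have ht2 : 2 ≤ t := by omega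
  have hle : n + 1 ≤ n ^ t := by
    have h1 : 2 * n ≤ n * n := Nat.mul_le_mul hn2 (le_refl n)
    have h2 : n * n ≤ n ^ t := by
      calc n * n = n ^ 2 := (pow_two n).symm
        _ ≤ n ^ t := Nat.pow_le_pow_right (by omega) ht2
    omega
  set U : Fin (n + 1) → (Fin t → V) := fun i => f.symm (Fin.castLE hle i) with hUdef
  have hU : ∀ i : Fin (n + 1), (f (U i) : ℕ) = (i : ℕ) := fun i => by
    simp [hUdef]
  have hUinj : Function.Injective U :=
    fun i j h => Fin.castLE_injective hle (f.symm.injective h)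
  -- the key inequality
  have key : ∀ i i' : Fin (n + 1), i < i' →
      (Finset.univ.filter fun a => U i a = U i' a).card * G.diam + 1
        ≤ (i' : ℕ) - (i : ℕ) := by
    intro i i' hii
    set A := Finset.univ.filter fun a => U i a = U i' a with hA
    have hne : U i ≠ U i' := fun h => (Fin.ne_of_lt hii) (hUinj h)
    have hrad := hf (U i) (U i') hne
    rw [hU i, hU i'] at hrad
    have hiin : (i : ℕ) < (i' : ℕ) := hii
    have habs : |(((i : ℕ) + 1 : ℕ) : ℤ) - (((i' : ℕ) + 1 : ℕ) : ℤ)|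
        = ((i' : ℕ) : ℤ) - ((i : ℕ) : ℤ) := by
      rw [abs_of_nonpos (by push_cast; omega)]
      push_cast
      ring
    rw [habs] at hrad
    have hAle : A.card ≤ t := by
      have := Finset.card_filter_le (Finset.univ : Finset (Fin t)) (fun a => U i a = U i' a)
      simpa using this
    have hdist : (G.cartPow t).dist (U i) (U i') ≤ (t - A.card) * G.diam := by
      refine (cartPow_dist_le hG _ _).trans ?_
      have hsplit := Finset.sum_filter_add_sum_filter_not Finset.univ
        (fun a => U i a = U i' a) (fun a => G.dist (U i a) (U i' a))
      have h0 : ∑ a ∈ Finset.univ.filter (fun a => U i a = U i' a), G.dist (U i a) (U i' a) = 0 :=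
        Finset.sum_eq_zero fun a ha => by
          rw [(Finset.mem_filter.mp ha).2, SimpleGraph.dist_self]
      have hb : ∑ a ∈ Finset.univ.filter (fun a => ¬ U i a = U i' a),
          G.dist (U i a) (U i' a)
          ≤ (Finset.univ.filter (fun a => ¬ U i a = U i' a)).card * G.diam := by
        calc ∑ a ∈ Finset.univ.filter (fun a => ¬ U i a = U i' a), G.dist (U i a) (U i' a)
            ≤ ∑ _a ∈ Finset.univ.filter (fun a => ¬ U i a = U i' a), G.diam :=
              Finset.sum_le_sum fun a _ => SimpleGraph.dist_le_diam hnetop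
          _ = _ := by rw [Finset.sum_const, smul_eq_mul]
      have hcards : A.card + (Finset.univ.filter (fun a => ¬ U i a = U i' a)).card = t := by
        have := Finset.card_filter_add_card_filter_not
          (s := (Finset.univ : Finset (Fin t))) (p := fun a => U i a = U i' a)
        simpa [hA] using this
      have hcardeq : (Finset.univ.filter (fun a => ¬ U i a = U i' a)).card = t - A.card := by
        omega
      rw [← hcardeq]
      omega
    -- combine
    have hXYZ : (t - A.card) * G.diam + A.card * G.diam = t * G.diam := by
      rw [← add_mul, Nat.sub_add_cancel hAle]
    have h1 : ((t * G.diam : ℕ) : ℤ)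
        = (((t - A.card) * G.diam : ℕ) : ℤ) + ((A.card * G.diam : ℕ) : ℤ) := by
      exact_mod_cast hXYZ.symm
    have h2 : (((G.cartPow t).dist (U i) (U i') : ℕ) : ℤ)
        ≤ (((t - A.card) * G.diam : ℕ) : ℤ) := by exact_mod_cast hdist
    have h3 : ((A.card * G.diam : ℕ) : ℤ) + 1 ≤ ((i' : ℕ) : ℤ) - ((i : ℕ) : ℤ) := by
      linarith [hrad]
    zify [le_of_lt hiin]
    exact_mod_cast h3
  -- pigeonhole: pick an equal pair for each coordinate
  have hpick : ∀ a : Fin t, ∃ p : Fin (n + 1) × Fin (n + 1),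
      p.1 < p.2 ∧ U p.1 a = U p.2 a := by
    intro a
    have hcards : Fintype.card V < Fintype.card (Fin (n + 1)) := by simp [hcard]
    obtain ⟨i, j, hij, he⟩ :=
      Fintype.exists_ne_map_eq_of_card_lt (fun i : Fin (n + 1) => U i a) hcards
    rcases lt_or_gt_of_ne hij with h | h
    · exact ⟨(i, j), h, he⟩
    · exact ⟨(j, i), h, he.symm⟩
  choose g hg1 hg2 using hpick
  -- counting
  have hcount : t ≤ ∑ p : Fin (n + 1) × Fin (n + 1), ((p.2 : ℕ) - (p.1 : ℕ) - 1) / G.diam := by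
    have hfib := Finset.card_eq_sum_card_fiberwise
      (f := g) (s := Finset.univ) (t := Finset.univ) (fun x _ => Finset.mem_univ _)
    calc t = (Finset.univ : Finset (Fin t)).card := by simp
      _ = ∑ p ∈ Finset.univ, (Finset.univ.filter fun a => g a = p).card := hfib
      _ ≤ ∑ p : Fin (n + 1) × Fin (n + 1), ((p.2 : ℕ) - (p.1 : ℕ) - 1) / G.diam := by
          refine Finset.sum_le_sum fun p _ => ?_
          rcases (Finset.univ.filter fun a => g a = p).eq_empty_or_nonempty with he | ⟨a, ha⟩
          · simp [he]
          · have hpa : g a = p := (Finset.mem_filter.mp ha).2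
            have hlt : p.1 < p.2 := hpa ▸ hg1 a
            have hsub : (Finset.univ.filter fun b => g b = p)
                ⊆ Finset.univ.filter fun b => U p.1 b = U p.2 b := by
              intro b hb
              have hgb : g b = p := (Finset.mem_filter.mp hb).2
              exact Finset.mem_filter.mpr ⟨Finset.mem_univ _, hgb ▸ hg2 b⟩
            have hcle := Finset.card_le_card hsub
            have hkey := key p.1 p.2 hlt
            rw [Nat.le_div_iff_mul_le (by omega : 0 < G.diam)]
            have hmul := Nat.mul_le_mul_right G.diam hcle
            omega
  rw [big_sum_eq n G.diam (by omega)] at hcount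
  omega
end

section
/- For every integer n ≥ 2 and every integer t ≥ 1 + n(n²−1)/6, the graph K_n^t does not admit a consecutive radio labeling; equivalently, rn(K_n^t) > n^t. -/
open Finset

lemma cartPow_walk_exists {n t : ℕ} :
    ∀ (m : ℕ) (x z : Fin t → Fin n), hammingDist x z ≤ m →
      ∃ w : ((⊤ : SimpleGraph (Fin n)).cartPow t).Walk x z, w.length ≤ hammingDist x z := by
  intro m
  induction m with
  | zero =>
    intro x z h
    have hx : x = z := hammingDist_eq_zero.mp (Nat.le_zero.mp h)
    subst hx
    exact ⟨SimpleGraph.Walk.nil, by simp⟩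
  | succ m ih =>
    intro x z h
    by_cases hxz : x = z
    · subst hxz; exact ⟨SimpleGraph.Walk.nil, by simp⟩
    · obtain ⟨a, ha⟩ : ∃ a, x a ≠ z a := Function.ne_iff.mp hxz
      set x' := Function.update x a (z a) with hx'
      have hadj : ((⊤ : SimpleGraph (Fin n)).cartPow t).Adj x x' := by
        refine ⟨a, ?_, fun k hk => ?_⟩
        · simp [hx', Function.update_self, ha]
        · simp [hx', Function.update_of_ne hk]
      have hsub : ({i | x' i ≠ z i} : Finset (Fin t)) ⊆ ({i | x i ≠ z i} : Finset (Fin t)).erase a := by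
        intro b hb
        simp only [mem_filter, mem_univ, true_and] at hb
        by_cases hba : b = a
        · subst hba; simp [hx', Function.update_self] at hb
        · rw [mem_erase]
          refine ⟨hba, ?_⟩
          simp only [mem_filter, mem_univ, true_and]
          rwa [hx', Function.update_of_ne hba] at hb
      have hmem : a ∈ ({i | x i ≠ z i} : Finset (Fin t)) := by
        simp only [mem_filter, mem_univ, true_and]; exact ha
      have hlt : hammingDist x' z < hammingDist x z := by
        have h1 : hammingDist x' z ≤ (({i | x i ≠ z i} : Finset (Fin t)).erase a).card :=
          card_le_card hsub
        have h2 : (({i | x i ≠ z i} : Finset (Fin t)).erase a).card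
            = hammingDist x z - 1 := by
          rw [card_erase_of_mem hmem]; rfl
        have h3 : 0 < hammingDist x z := hammingDist_pos.mpr hxz
        omega
      obtain ⟨w', hw'⟩ := ih x' z (by omega)
      exact ⟨SimpleGraph.Walk.cons hadj w', by simpa using by omega⟩

lemma cartPow_dist_le_hammingDist {n t : ℕ} (x z : Fin t → Fin n) :
    ((⊤ : SimpleGraph (Fin n)).cartPow t).dist x z ≤ hammingDist x z := by
  obtain ⟨w, hw⟩ := cartPow_walk_exists (hammingDist x z) x z le_rfl
  exact le_trans (SimpleGraph.dist_le w) hw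

lemma aux_gauss : ∀ g : ℕ, ∑ h ∈ Icc 1 g, (h - 1) = g.choose 2 := by
  intro g
  induction g with
  | zero => simp
  | succ g ih =>
    rw [Finset.sum_Icc_succ_top (by omega), ih]
    have h := Nat.choose_succ_succ g 1
    rw [Nat.choose_one_right] at h
    have h2 : (g + 1).choose 2 = g + g.choose 2 := by
      simpa using h
    omega

lemma aux_sum_choose : ∀ n : ℕ, ∑ g ∈ range (n + 1), g.choose 2 = (n + 1).choose 3 := by
  intro n
  induction n with
  | zero => decide
  | succ n ih =>
    rw [Finset.sum_range_succ, ih]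
    have h : (n + 2).choose 3 = (n + 1).choose 2 + (n + 1).choose 3 := by
      simpa using Nat.choose_succ_succ (n + 1) 2
    have h2 : (n + 1 + 1).choose 3 = (n + 2).choose 3 := rfl
    omega

lemma aux_two_choose : ∀ m : ℕ, 2 * m.choose 2 = m * (m - 1) := by
  intro m
  induction m with
  | zero => simp
  | succ m ih =>
    have h : (m + 1).choose 2 = m + m.choose 2 := by
      have h := Nat.choose_succ_succ m 1
      rw [Nat.choose_one_right] at h
      simpa using h
    rcases Nat.eq_zero_or_pos m with hm | hm
    · subst hm; decide
    · obtain ⟨k, rfl⟩ : ∃ k, m = k + 1 := ⟨m - 1, by omega⟩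
      simp only [Nat.add_sub_cancel] at *
      rw [h]
      have e2 : (k + 1 + 1) * (k + 1) = (k + 1) * k + 2 * (k + 1) := by ring
      omega

lemma aux_six : ∀ n : ℕ, 6 * ((n + 1).choose 3) = (n - 1) * n * (n + 1) := by
  intro n
  induction n with
  | zero => decide
  | succ n ih =>
    have h : (n + 2).choose 3 = (n + 1).choose 2 + (n + 1).choose 3 := by
      simpa using Nat.choose_succ_succ (n + 1) 2
    have h2 := aux_two_choose (n + 1)
    simp only [Nat.add_sub_cancel] at h2
    rcases Nat.eq_zero_or_pos n with hm | hm
    · subst hm; decide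
    · obtain ⟨k, rfl⟩ : ∃ k, n = k + 1 := ⟨n - 1, by omega⟩
      simp only [Nat.add_sub_cancel] at *
      rw [h]
      have e2 : (k + 1) * (k + 1 + 1) * (k + 1 + 1 + 1) = k * (k + 1) * (k + 1 + 1) + 3 * ((k + 1 + 1) * (k + 1)) := by ring
      have h3 : (k + 1 + 2).choose 3 = (k + 1 + 1).choose 2 + (k + 1 + 1).choose 3 := h
      omega

lemma aux_six' {n : ℕ} (hn : 1 ≤ n) : 6 * ((n + 1).choose 3) = n * (n ^ 2 - 1) := by
  rw [aux_six n]
  obtain ⟨k, rfl⟩ : ∃ k, n = k + 1 := ⟨n - 1, by omega⟩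
  have e1 : (k + 1) ^ 2 - 1 = k * (k + 2) := by
    have : (k + 1) ^ 2 = k * (k + 2) + 1 := by ring
    omega
  rw [e1]
  simp only [Nat.add_sub_cancel]
  ring

lemma aux_pow3 : ∀ t : ℕ, 5 ≤ t → 3 * t * t ≤ 3 ^ (t - 1) := by
  intro t ht
  induction t with
  | zero => omega
  | succ t ih =>
    rcases Nat.lt_or_ge t 5 with h | h
    · interval_cases t <;> simp_all
    · have iht := ih (by omega)
      have h1 : t + 1 - 1 = t := by omega
      have h2 : 3 ^ t = 3 * 3 ^ (t - 1) := by
        conv_lhs => rw [show t = (t - 1) + 1 by omega]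
        ring
      rw [h1, h2]
      nlinarith [iht, h]

lemma aux_pow {n t : ℕ} (hn : 3 ≤ n) (ht : 5 ≤ t) : n * t * t + n * t + t < n ^ t := by
  have h1 : 3 ^ (t - 1) ≤ n ^ (t - 1) := Nat.pow_le_pow_left hn _
  have h2 : n ^ t = n * n ^ (t - 1) := by
    conv_lhs => rw [show t = (t - 1) + 1 by omega]
    ring
  have h3 := aux_pow3 t ht
  have h4 : n * (3 * t * t) ≤ n * n ^ (t - 1) := by
    calc n * (3 * t * t) ≤ n * 3 ^ (t - 1) := Nat.mul_le_mul_left _ h3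
    _ ≤ n * n ^ (t - 1) := Nat.mul_le_mul_left _ h1
  have h5 : n * t * t + n * t + t < n * (3 * t * t) := by
    have e : n * (3 * t * t) = 3 * (n * t * t) := by ring
    rw [e]
    have ha : n * t * 5 ≤ n * t * t := Nat.mul_le_mul_left (n * t) ht
    have hb : t ≤ n * t := Nat.le_mul_of_pos_left t (by omega)
    set B := n * t with hB
    set A := B * t with hA
    omega
  omega

theorem cartPow_complete_no_consecutive_radio_labeling {n t : ℕ} (hn : 2 ≤ n)
    (ht : 1 + n * (n ^ 2 - 1) / 6 ≤ t) :
    ¬∃ f : (Fin t → Fin n) ≃ Fin (n ^ t),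
        ∀ x y : Fin t → Fin n, x ≠ y →
          (t : ℤ) + 1 - ((⊤ : SimpleGraph (Fin n)).cartPow t).dist x y ≤
            |(((f x : ℕ) + 1 : ℕ) : ℤ) - (((f y : ℕ) + 1 : ℕ) : ℤ)| := by
  rintro ⟨f, hf⟩
  obtain ⟨N, hN⟩ : ∃ N, N = n ^ t := ⟨_, rfl⟩
  have hN0 : 0 < N := by rw [hN]; positivity
  have htN : t < N := by
    rw [hN]
    exact Nat.lt_pow_self (show 1 < n by omega)
  -- basic numeric facts
  have h6 : 6 * ((n + 1).choose 3) = n * (n ^ 2 - 1) := aux_six' (by omega)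
  have hc3t : (n + 1).choose 3 + 1 ≤ t := by
    set Y := n * (n ^ 2 - 1) with hY
    omega
  have hnt : n ≤ t := by
    have h6' := aux_six n
    have hz : (6 : ℕ) ≤ n * (n + 1) := by
      have := Nat.mul_le_mul hn (show 3 ≤ n + 1 by omega)
      norm_num at this
      exact this
    have hx : (n - 1) * 6 ≤ (n - 1) * (n * (n + 1)) := Nat.mul_le_mul_left _ hz
    have hassoc : (n - 1) * (n * (n + 1)) = (n - 1) * n * (n + 1) := by ring
    rw [hassoc] at hx
    set X := (n - 1) * n * (n + 1) with hXdef
    omega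
  -- the ordered sequence of vertices
  obtain ⟨y, hyv⟩ : ∃ y : ℕ → Fin t → Fin n, ∀ i, i < N → (f (y i) : ℕ) = i :=
    ⟨fun i => f.symm ⟨i % N, hN ▸ Nat.mod_lt _ hN0⟩, fun i hi => by
      simp [Equiv.apply_symm_apply, Nat.mod_eq_of_lt hi]⟩
  have hyinj : ∀ i j, i < N → j < N → y i = y j → i = j := by
    intro i j hi hj h
    have h2 := congrArg (fun z => (f z : ℕ)) h
    rwa [hyv i hi, hyv j hj] at h2
  -- key combinatorial constraint
  have hC : ∀ i j, i < j → j < N → j - i ≤ t →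
      (univ.filter fun a => y i a = y j a).card ≤ j - i - 1 := by
    intro i j hij hjN hgap
    have hy : y i ≠ y j := by
      intro h
      have := hyinj i j (by omega) hjN h
      omega
    have hmain := hf (y i) (y j) hy
    have habs : |(((f (y i) : ℕ) + 1 : ℕ) : ℤ) - (((f (y j) : ℕ) + 1 : ℕ) : ℤ)|
        = (j : ℤ) - (i : ℤ) := by
      rw [hyv i (by omega), hyv j hjN]
      have e1 : (((i + 1 : ℕ) : ℤ)) - ((j + 1 : ℕ) : ℤ) = -((j : ℤ) - (i : ℤ)) := by
        push_cast; ring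
      rw [e1, abs_neg, abs_of_nonneg (by omega)]
    rw [habs] at hmain
    have hdle := cartPow_dist_le_hammingDist (n := n) (t := t) (y i) (y j)
    have hham : hammingDist (y i) (y j) = (univ.filter fun a => ¬ y i a = y j a).card := by
      simp [hammingDist, ne_eq]
    have hsplit := Finset.card_filter_add_card_filter_not
      (p := fun a => y i a = y j a) (s := (univ : Finset (Fin t)))
    rw [← hham] at hsplit
    have hcu : (univ : Finset (Fin t)).card = t := by simp
    rw [hcu] at hsplit
    omega
  rcases Nat.lt_or_ge n 3 with hn2 | hn3
  · -- n = 2 : antipodal argument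
    have hn2' : n = 2 := by omega
    have hy02 : y 0 = y 2 := by
      funext a
      have h01 := hC 0 1 (by omega) (by omega) (by omega)
      have h12 := hC 1 2 (by omega) (by omega) (by omega)
      have e01 : (univ.filter fun b => y 0 b = y 1 b) = ∅ := card_eq_zero.mp (by omega)
      have e12 : (univ.filter fun b => y 1 b = y 2 b) = ∅ := card_eq_zero.mp (by omega)
      have ha1 : ¬ y 0 a = y 1 a := by
        intro hEq
        have hm : a ∈ (univ.filter fun b => y 0 b = y 1 b) := mem_filter.mpr ⟨mem_univ a, hEq⟩
        rw [e01] at hm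
        exact absurd hm (notMem_empty a)
      have ha2 : ¬ y 1 a = y 2 a := by
        intro hEq
        have hm : a ∈ (univ.filter fun b => y 1 b = y 2 b) := mem_filter.mpr ⟨mem_univ a, hEq⟩
        rw [e12] at hm
        exact absurd hm (notMem_empty a)
      have v0 : (y 0 a).val < n := (y 0 a).isLt
      have v1 : (y 1 a).val < n := (y 1 a).isLt
      have v2 : (y 2 a).val < n := (y 2 a).isLt
      have w1 : (y 0 a).val ≠ (y 1 a).val := fun h => ha1 (Fin.ext h)
      have w2 : (y 1 a).val ≠ (y 2 a).val := fun h => ha2 (Fin.ext h)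
      exact Fin.ext (by omega)
    have := hyinj 0 2 (by omega) (by omega) hy02
    omega
  · -- n ≥ 3 : counting argument
    have hch4 : 4 ≤ (n + 1).choose 3 := by
      have h6' := aux_six n
      have hm1 : 2 * 3 * 4 ≤ (n - 1) * n * (n + 1) :=
        Nat.mul_le_mul (Nat.mul_le_mul (by omega) (by omega)) (by omega)
      norm_num at hm1
      set X := (n - 1) * n * (n + 1) with hXdef
      omega
    have ht5 : 5 ≤ t := by omega
    set M := N - t with hM
    have hM1 : 1 ≤ M := by omega
    -- next-recurrence function
    obtain ⟨e, he_mem, he_min⟩ : ∃ e : ℕ → Fin t → ℕ,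
        (∀ i a, ((i < e i a ∧ e i a < N ∧ y (e i a) a = y i a) ∨ e i a = i + t + 1) ∧
          e i a ≤ i + t + 1) ∧
        (∀ i a j, i < j → j < N → y j a = y i a → e i a ≤ j) := by
      refine ⟨fun i a => sInf {j | (i < j ∧ j < N ∧ y j a = y i a) ∨ j = i + t + 1}, ?_, ?_⟩
      · intro i a
        have hne : ({j | (i < j ∧ j < N ∧ y j a = y i a) ∨ j = i + t + 1} : Set ℕ).Nonempty :=
          ⟨i + t + 1, Or.inr rfl⟩
        have hmem := Nat.sInf_mem hne
        have hle : sInf {j | (i < j ∧ j < N ∧ y j a = y i a) ∨ j = i + t + 1} ≤ i + t + 1 :=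
          Nat.sInf_le (Or.inr rfl)
        exact ⟨hmem, hle⟩
      · intro i a j h1 h2 h3
        exact Nat.sInf_le (Or.inl ⟨h1, h2, h3⟩)
    have he_pos : ∀ i a, i < e i a := by
      intro i a
      rcases (he_mem i a).1 with h | h
      · exact h.1
      · omega
    have he_le : ∀ i a, e i a ≤ i + t + 1 := fun i a => (he_mem i a).2
    -- lower bound
    have hlow : ∀ i, i < M → n * t + 1 ≤ ∑ a : Fin t, (e i a - i) := by
      intro i hiM
      have key : ∀ g, g ≤ n → (univ.filter fun a => e i a ≤ i + g).card ≤ g.choose 2 := by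
        intro g hg
        have hsub : (univ.filter fun a => e i a ≤ i + g) ⊆
            (Icc 1 g).biUnion (fun h => univ.filter fun a => y i a = y (i + h) a) := by
          intro a ha
          simp only [mem_filter, mem_univ, true_and] at ha
          rcases (he_mem i a).1 with hm | hm
          · refine mem_biUnion.mpr ⟨e i a - i, ?_, ?_⟩
            · rw [mem_Icc]
              have := he_pos i a
              omega
            · simp only [mem_filter, mem_univ, true_and]
              rw [show i + (e i a - i) = e i a by have := he_pos i a; omega]
              exact hm.2.2.symm
          · omega
        calc (univ.filter fun a => e i a ≤ i + g).card
            ≤ ∑ h ∈ Icc 1 g, (univ.filter fun a => y i a = y (i + h) a).card :=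
              le_trans (card_le_card hsub) card_biUnion_le
          _ ≤ ∑ h ∈ Icc 1 g, (h - 1) := by
              refine sum_le_sum ?_
              intro h hh
              rw [mem_Icc] at hh
              have hc := hC i (i + h) (by omega) (by omega) (by omega)
              have e2 : i + h - i - 1 = h - 1 := by omega
              rwa [e2] at hc
          _ = g.choose 2 := aux_gauss g
      have step2 : ∑ g ∈ range (n + 1), (t - g.choose 2) ≤ ∑ a : Fin t, (e i a - i) := by
        calc ∑ g ∈ range (n + 1), (t - g.choose 2)
            ≤ ∑ g ∈ range (n + 1), (univ.filter fun a => g < e i a - i).card := by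
              refine sum_le_sum ?_
              intro g hg
              rw [mem_range] at hg
              have hcompl := Finset.card_filter_add_card_filter_not
                (p := fun a => g < e i a - i) (s := (univ : Finset (Fin t)))
              have hEq : (univ.filter fun a => ¬ g < e i a - i)
                  = (univ.filter fun a => e i a ≤ i + g) := by
                refine filter_congr ?_
                intro a _
                have := he_pos i a
                constructor
                · intro h; omega
                · intro h; omega
              rw [hEq] at hcompl
              have hcard := key g (by omega)
              have hcu : (univ : Finset (Fin t)).card = t := by simp
              rw [hcu] at hcompl
              omega
          _ = ∑ a : Fin t, ((range (n + 1)).filter fun g => g < e i a - i).card := by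
              simp only [Finset.card_filter]
              exact Finset.sum_comm
          _ ≤ ∑ a : Fin t, (e i a - i) := by
              refine sum_le_sum ?_
              intro a _
              have hsub2 : ((range (n + 1)).filter fun g => g < e i a - i) ⊆ range (e i a - i) := by
                intro g hg
                simp only [mem_filter, mem_range] at hg ⊢
                exact hg.2
              calc ((range (n + 1)).filter fun g => g < e i a - i).card
                  ≤ (range (e i a - i)).card := card_le_card hsub2
                _ = e i a - i := card_range _
      have hfin : n * t + 1 ≤ ∑ g ∈ range (n + 1), (t - g.choose 2) := by
        have hpt : ∀ g ∈ range (n + 1), t ≤ g.choose 2 + (t - g.choose 2) := fun g _ => by omega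
        have hsum_le : ∑ _g ∈ range (n + 1), t
            ≤ ∑ g ∈ range (n + 1), (g.choose 2 + (t - g.choose 2)) := sum_le_sum hpt
        rw [Finset.sum_add_distrib, aux_sum_choose n, Finset.sum_const, card_range,
          smul_eq_mul] at hsum_le
        rw [show (n + 1) * t = n * t + t by ring] at hsum_le
        set u := n * t with hu
        omega
      exact le_trans hfin step2
    -- upper bound
    have hup : ∀ a : Fin t, ∑ i ∈ range M, (e i a - i) ≤ n * (N + 1) := by
      intro a
      rw [← Finset.sum_fiberwise (range M) (fun i => y i a) (fun i => e i a - i)]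
      have hper : ∀ v : Fin n,
          ∑ i ∈ (range M).filter (fun i => y i a = v), (e i a - i) ≤ N + 1 := by
        intro v
        set S := (range M).filter (fun i => y i a = v) with hS
        have hdisj : ∀ i1 ∈ S, ∀ i2 ∈ S, i1 ≠ i2 →
            Disjoint (Ioc i1 (e i1 a)) (Ioc i2 (e i2 a)) := by
          have key2 : ∀ j1 j2 : ℕ, j1 < M → j2 < M → y j1 a = v → y j2 a = v → j1 < j2 →
              Disjoint (Ioc j1 (e j1 a)) (Ioc j2 (e j2 a)) := by
            intro j1 j2 hj1 hj2 hv1 hv2 hlt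
            have hle : e j1 a ≤ j2 := he_min j1 a j2 hlt (by omega) (hv2.trans hv1.symm)
            rw [Finset.disjoint_left]
            intro x hx1 hx2
            rw [mem_Ioc] at hx1 hx2
            omega
          intro i1 h1 i2 h2 hne
          rw [hS, mem_filter, mem_range] at h1 h2
          rcases Nat.lt_or_ge i1 i2 with h | h
          · exact key2 i1 i2 h1.1 h2.1 h1.2 h2.2 h
          · exact (key2 i2 i1 h2.1 h1.1 h2.2 h1.2 (by omega)).symm
        have hcards : ∑ i ∈ S, (e i a - i) = ∑ i ∈ S, (Ioc i (e i a)).card := by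
          refine sum_congr rfl ?_
          intro i _
          rw [Nat.card_Ioc]
        rw [hcards, ← Finset.card_biUnion hdisj]
        have hsub : S.biUnion (fun i => Ioc i (e i a)) ⊆ range (N + 1) := by
          intro x hx
          rw [mem_biUnion] at hx
          obtain ⟨i, hi, hxi⟩ := hx
          rw [hS, mem_filter, mem_range] at hi
          rw [mem_Ioc] at hxi
          have := he_le i a
          rw [mem_range]
          omega
        calc (S.biUnion (fun i => Ioc i (e i a))).card
            ≤ (range (N + 1)).card := card_le_card hsub
          _ = N + 1 := card_range _
      calc ∑ v : Fin n, ∑ i ∈ (range M).filter (fun i => y i a = v), (e i a - i)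
          ≤ ∑ _v : Fin n, (N + 1) := sum_le_sum (fun v _ => hper v)
        _ = n * (N + 1) := by simp [mul_comm]
    -- combine
    have hsum1 : M * (n * t + 1) ≤ ∑ i ∈ range M, ∑ a : Fin t, (e i a - i) := by
      calc M * (n * t + 1) = ∑ _i ∈ range M, (n * t + 1) := by
            rw [Finset.sum_const, card_range, smul_eq_mul]
        _ ≤ _ := sum_le_sum (fun i hi => hlow i (mem_range.mp hi))
    have hsum2 : ∑ i ∈ range M, ∑ a : Fin t, (e i a - i) ≤ t * (n * (N + 1)) := by
      rw [Finset.sum_comm]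
      calc ∑ a : Fin t, ∑ i ∈ range M, (e i a - i)
          ≤ ∑ _a : Fin t, n * (N + 1) := sum_le_sum (fun a _ => hup a)
        _ = t * (n * (N + 1)) := by simp [mul_comm]
    have hP : N = M + t := by omega
    have hMle : M ≤ n * t * t + n * t := by
      have h := le_trans hsum1 hsum2
      have e1 : M * (n * t + 1) = n * t * M + M := by ring
      have e2 : t * (n * (N + 1)) = n * t * M + (n * t * t + n * t) := by rw [hP]; ring
      rw [e1, e2] at h
      exact Nat.le_of_add_le_add_left h
    have hbig := aux_pow hn3 ht5
    rw [← hN] at hbig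
    set A := n * t * t with hA
    set B := n * t with hB
    omega
end
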